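/- Let m ≥ 1, P(m) = {g ∈ GL_3(O_F) : g₃₁, g₃₂ ∈ ϖ^m O_F}, and N_l the lower (1,2)-block unipotent subgroup. Then the inclusion N_l ∩ P(m) ↪ P(m) induces a bijection (N_l ∩ P(m))/(N_l ∩ P(m+1)) ≅ P(m)/P(m+1), and both quotients have cardinality q² where q = |O_F/ϖ|; moreover the quotient is isomorphic as an abelian group to (O_F/ϖ)², hence the restriction to N_l ∩ P(m) of the regular representation of P(m)/P(m+1) decomposes as the direct sum of the q² characters of (N_l ∩ P(m))/(N_l ∩ P(m+1)), each with multiplicity one. -/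

import Mathlib

set_option linter.unusedSectionVars false
set_option maxHeartbeats 1000000
set_option synthInstance.maxHeartbeats 1000000

open Matrix

/-- The congruence "parahoric" subgroup `P(m) ⊆ GL₃(O)`: invertible integral matrices
whose two bottom-left entries lie in `ϖ^m O`. -/
def Pm (O : Type) [CommRing O] [IsDomain O] [IsDiscreteValuationRing O] (ϖ : O) (m : ℕ) :
    Subgroup (Matrix (Fin 3) (Fin 3) O)ˣ where
  carrier := {g | ϖ ^ m ∣ (g : Matrix (Fin 3) (Fin 3) O) 2 0 ∧
    ϖ ^ m ∣ (g : Matrix (Fin 3) (Fin 3) O) 2 1}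
  one_mem' := by
    constructor <;> simp [Matrix.one_apply]
  mul_mem' := by
    rintro a b ⟨ha0, ha1⟩ ⟨hb0, hb1⟩
    constructor <;> simp only [Units.val_mul, Matrix.mul_apply, Fin.sum_univ_three]
    · exact dvd_add (dvd_add (ha0.mul_right _) (ha1.mul_right _)) (hb0.mul_left _)
    · exact dvd_add (dvd_add (ha0.mul_right _) (ha1.mul_right _)) (hb1.mul_left _)
  inv_mem' := by
    rintro a ⟨ha0, ha1⟩
    have h : ((a⁻¹ : (Matrix (Fin 3) (Fin 3) O)ˣ) : Matrix (Fin 3) (Fin 3) O)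
        = (a : Matrix (Fin 3) (Fin 3) O)⁻¹ := (Matrix.coe_units_inv a)
    have h20 : ((a⁻¹ : (Matrix (Fin 3) (Fin 3) O)ˣ) : Matrix (Fin 3) (Fin 3) O) 2 0
        = Ring.inverse (a : Matrix (Fin 3) (Fin 3) O).det *
          ((a : Matrix (Fin 3) (Fin 3) O) 1 0 * (a : Matrix (Fin 3) (Fin 3) O) 2 1
            - (a : Matrix (Fin 3) (Fin 3) O) 1 1 * (a : Matrix (Fin 3) (Fin 3) O) 2 0) := by
      rw [h, Matrix.inv_def, Matrix.adjugate_fin_three]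
      simp
    have h21 : ((a⁻¹ : (Matrix (Fin 3) (Fin 3) O)ˣ) : Matrix (Fin 3) (Fin 3) O) 2 1
        = Ring.inverse (a : Matrix (Fin 3) (Fin 3) O).det *
          (-((a : Matrix (Fin 3) (Fin 3) O) 0 0 * (a : Matrix (Fin 3) (Fin 3) O) 2 1)
            + (a : Matrix (Fin 3) (Fin 3) O) 0 1 * (a : Matrix (Fin 3) (Fin 3) O) 2 0) := by
      rw [h, Matrix.inv_def, Matrix.adjugate_fin_three]
      simp
    constructor
    · rw [h20]
      exact ((dvd_sub (ha1.mul_left _) (ha0.mul_left _)).mul_left _)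
    · rw [h21]
      exact ((dvd_add (dvd_neg.mpr (ha1.mul_left _)) (ha0.mul_left _)).mul_left _)

/-- The lower `(1,2)`-block unipotent subgroup `N_l ⊆ GL₃(O)`. -/
def Nl (O : Type) [CommRing O] [IsDomain O] [IsDiscreteValuationRing O] :
    Subgroup (Matrix (Fin 3) (Fin 3) O)ˣ where
  carrier := {g | (g : Matrix (Fin 3) (Fin 3) O) 0 0 = 1 ∧
    (g : Matrix (Fin 3) (Fin 3) O) 1 1 = 1 ∧ (g : Matrix (Fin 3) (Fin 3) O) 2 2 = 1 ∧
    (g : Matrix (Fin 3) (Fin 3) O) 0 1 = 0 ∧ (g : Matrix (Fin 3) (Fin 3) O) 0 2 = 0 ∧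
    (g : Matrix (Fin 3) (Fin 3) O) 1 0 = 0 ∧ (g : Matrix (Fin 3) (Fin 3) O) 1 2 = 0}
  one_mem' := by
    refine ⟨?_, ?_, ?_, ?_, ?_, ?_, ?_⟩ <;> simp [Matrix.one_apply]
  mul_mem' := by
    rintro a b ⟨ha1, ha2, ha3, ha4, ha5, ha6, ha7⟩ ⟨hb1, hb2, hb3, hb4, hb5, hb6, hb7⟩
    refine ⟨?_, ?_, ?_, ?_, ?_, ?_, ?_⟩ <;>
      simp [Units.val_mul, Matrix.mul_apply, Fin.sum_univ_three,
        ha1, ha2, ha3, ha4, ha5, ha6, ha7, hb1, hb2, hb3, hb4, hb5, hb6, hb7]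
  inv_mem' := by
    rintro a ⟨ha1, ha2, ha3, ha4, ha5, ha6, ha7⟩
    have hdet : (a : Matrix (Fin 3) (Fin 3) O).det = 1 := by
      rw [Matrix.det_fin_three]
      simp [ha1, ha2, ha3, ha4, ha5, ha6, ha7]
    have h : ((a⁻¹ : (Matrix (Fin 3) (Fin 3) O)ˣ) : Matrix (Fin 3) (Fin 3) O)
        = (a : Matrix (Fin 3) (Fin 3) O)⁻¹ := (Matrix.coe_units_inv a)
    refine ⟨?_, ?_, ?_, ?_, ?_, ?_, ?_⟩ <;>
      · rw [h, Matrix.inv_def, Matrix.adjugate_fin_three, hdet]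
        simp [ha1, ha2, ha3, ha4, ha5, ha6, ha7]


section Aux

variable {O : Type} [CommRing O] [IsDomain O] [IsDiscreteValuationRing O]

def nMat (a b : O) : Matrix (Fin 3) (Fin 3) O := !![1,0,0;0,1,0;a,b,1]

lemma nMat_mul (a b c d : O) : nMat a b * nMat c d = nMat (a+c) (b+d) := by
  simp [nMat, Matrix.mul_fin_three]

lemma nMat_zero : nMat (0:O) 0 = 1 := by rw [nMat, Matrix.one_fin_three]

def nUnit (a b : O) : (Matrix (Fin 3) (Fin 3) O)ˣ :=
  ⟨nMat a b, nMat (-a) (-b), by rw [nMat_mul]; simp [nMat_zero],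
    by rw [nMat_mul]; simp [nMat_zero]⟩

@[simp] lemma nUnit_val (a b : O) :
    ((nUnit a b : (Matrix (Fin 3) (Fin 3) O)ˣ) : Matrix (Fin 3) (Fin 3) O) = nMat a b := rfl

@[simp] lemma nUnit_inv_val (a b : O) :
    (((nUnit a b)⁻¹ : (Matrix (Fin 3) (Fin 3) O)ˣ) : Matrix (Fin 3) (Fin 3) O)
      = nMat (-a) (-b) := rfl

@[simp] lemma nMat_apply_20 (a b : O) : nMat a b 2 0 = a := rfl
@[simp] lemma nMat_apply_21 (a b : O) : nMat a b 2 1 = b := rfl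
@[simp] lemma nMat_apply_00 (a b : O) : nMat a b 0 0 = 1 := rfl
@[simp] lemma nMat_apply_11 (a b : O) : nMat a b 1 1 = 1 := rfl
@[simp] lemma nMat_apply_22 (a b : O) : nMat a b 2 2 = 1 := rfl
@[simp] lemma nMat_apply_01 (a b : O) : nMat a b 0 1 = 0 := rfl
@[simp] lemma nMat_apply_02 (a b : O) : nMat a b 0 2 = 0 := rfl
@[simp] lemma nMat_apply_10 (a b : O) : nMat a b 1 0 = 0 := rfl
@[simp] lemma nMat_apply_12 (a b : O) : nMat a b 1 2 = 0 := rfl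


lemma mem_Pm_iff {ϖ : O} {m : ℕ} {g : (Matrix (Fin 3) (Fin 3) O)ˣ} :
    g ∈ Pm O ϖ m ↔ ϖ ^ m ∣ (g : Matrix (Fin 3) (Fin 3) O) 2 0 ∧
      ϖ ^ m ∣ (g : Matrix (Fin 3) (Fin 3) O) 2 1 := Iff.rfl

lemma mem_Nl_iff {g : (Matrix (Fin 3) (Fin 3) O)ˣ} :
    g ∈ Nl O ↔ (g : Matrix (Fin 3) (Fin 3) O) 0 0 = 1 ∧
    (g : Matrix (Fin 3) (Fin 3) O) 1 1 = 1 ∧ (g : Matrix (Fin 3) (Fin 3) O) 2 2 = 1 ∧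
    (g : Matrix (Fin 3) (Fin 3) O) 0 1 = 0 ∧ (g : Matrix (Fin 3) (Fin 3) O) 0 2 = 0 ∧
    (g : Matrix (Fin 3) (Fin 3) O) 1 0 = 0 ∧ (g : Matrix (Fin 3) (Fin 3) O) 1 2 = 0 := Iff.rfl

lemma nUnit_mem_Nl (a b : O) : nUnit a b ∈ Nl O := by
  rw [mem_Nl_iff]
  refine ⟨rfl, rfl, rfl, rfl, rfl, rfl, rfl⟩

lemma nUnit_mem_inf (ϖ : O) (m : ℕ) (v₁ v₂ : O) :
    nUnit (ϖ ^ m * v₁) (ϖ ^ m * v₂) ∈ Nl O ⊓ Pm O ϖ m := by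
  refine Subgroup.mem_inf.mpr ⟨nUnit_mem_Nl _ _, mem_Pm_iff.mpr ⟨?_, ?_⟩⟩ <;>
    simp [Dvd.intro]

lemma Nl_inv_20 {n : (Matrix (Fin 3) (Fin 3) O)ˣ} (hn : n ∈ Nl O) :
    ((n⁻¹ : (Matrix (Fin 3) (Fin 3) O)ˣ) : Matrix (Fin 3) (Fin 3) O) 2 0
      = -(n : Matrix (Fin 3) (Fin 3) O) 2 0 := by
  have hn' := (Nl O).inv_mem hn
  obtain ⟨h1, h2, h3, h4, h5, h6, h7⟩ := mem_Nl_iff.mp hn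
  obtain ⟨k1, k2, k3, k4, k5, k6, k7⟩ := mem_Nl_iff.mp hn'
  have := congrArg (fun M : Matrix (Fin 3) (Fin 3) O => M 2 0)
    (congrArg Units.val (inv_mul_cancel n))
  simp only [Units.val_mul, Matrix.mul_apply, Fin.sum_univ_three, Units.val_one,
    Matrix.one_apply] at this
  rw [h1, h6, k3] at this
  simp at this
  have hc : ((n⁻¹ : (Matrix (Fin 3) (Fin 3) O)ˣ) : Matrix (Fin 3) (Fin 3) O)
      = (n : Matrix (Fin 3) (Fin 3) O)⁻¹ := Matrix.coe_units_inv n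
  rw [hc]
  linear_combination this

lemma Nl_inv_21 {n : (Matrix (Fin 3) (Fin 3) O)ˣ} (hn : n ∈ Nl O) :
    ((n⁻¹ : (Matrix (Fin 3) (Fin 3) O)ˣ) : Matrix (Fin 3) (Fin 3) O) 2 1
      = -(n : Matrix (Fin 3) (Fin 3) O) 2 1 := by
  have hn' := (Nl O).inv_mem hn
  obtain ⟨h1, h2, h3, h4, h5, h6, h7⟩ := mem_Nl_iff.mp hn
  obtain ⟨k1, k2, k3, k4, k5, k6, k7⟩ := mem_Nl_iff.mp hn'
  have := congrArg (fun M : Matrix (Fin 3) (Fin 3) O => M 2 1)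
    (congrArg Units.val (inv_mul_cancel n))
  simp only [Units.val_mul, Matrix.mul_apply, Fin.sum_univ_three, Units.val_one,
    Matrix.one_apply] at this
  rw [h4, h2, k3] at this
  simp at this
  have hc : ((n⁻¹ : (Matrix (Fin 3) (Fin 3) O)ˣ) : Matrix (Fin 3) (Fin 3) O)
      = (n : Matrix (Fin 3) (Fin 3) O)⁻¹ := Matrix.coe_units_inv n
  rw [hc]
  linear_combination this

lemma Nl_mul_20 {n₁ n₂ : (Matrix (Fin 3) (Fin 3) O)ˣ} (h₁ : n₁ ∈ Nl O) (h₂ : n₂ ∈ Nl O) :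
    ((n₁⁻¹ * n₂ : (Matrix (Fin 3) (Fin 3) O)ˣ) : Matrix (Fin 3) (Fin 3) O) 2 0
      = (n₂ : Matrix (Fin 3) (Fin 3) O) 2 0 - (n₁ : Matrix (Fin 3) (Fin 3) O) 2 0 := by
  have hi := (Nl O).inv_mem h₁
  obtain ⟨k1, k2, k3, k4, k5, k6, k7⟩ := mem_Nl_iff.mp hi
  obtain ⟨g1, g2, g3, g4, g5, g6, g7⟩ := mem_Nl_iff.mp h₂
  have e20 := Nl_inv_20 h₁
  have hc : ((n₁⁻¹ : (Matrix (Fin 3) (Fin 3) O)ˣ) : Matrix (Fin 3) (Fin 3) O)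
      = (n₁ : Matrix (Fin 3) (Fin 3) O)⁻¹ := Matrix.coe_units_inv n₁
  rw [hc] at e20 k1 k2 k3 k4 k5 k6 k7
  simp only [Units.val_mul, Matrix.mul_apply, Fin.sum_univ_three, hc]
  rw [e20, g1, g6, k3]
  ring

lemma Nl_mul_21 {n₁ n₂ : (Matrix (Fin 3) (Fin 3) O)ˣ} (h₁ : n₁ ∈ Nl O) (h₂ : n₂ ∈ Nl O) :
    ((n₁⁻¹ * n₂ : (Matrix (Fin 3) (Fin 3) O)ˣ) : Matrix (Fin 3) (Fin 3) O) 2 1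
      = (n₂ : Matrix (Fin 3) (Fin 3) O) 2 1 - (n₁ : Matrix (Fin 3) (Fin 3) O) 2 1 := by
  have hi := (Nl O).inv_mem h₁
  obtain ⟨k1, k2, k3, k4, k5, k6, k7⟩ := mem_Nl_iff.mp hi
  obtain ⟨g1, g2, g3, g4, g5, g6, g7⟩ := mem_Nl_iff.mp h₂
  have e21 := Nl_inv_21 h₁
  have hc : ((n₁⁻¹ : (Matrix (Fin 3) (Fin 3) O)ˣ) : Matrix (Fin 3) (Fin 3) O)
      = (n₁ : Matrix (Fin 3) (Fin 3) O)⁻¹ := Matrix.coe_units_inv n₁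
  rw [hc] at e21 k1 k2 k3 k4 k5 k6 k7
  simp only [Units.val_mul, Matrix.mul_apply, Fin.sum_univ_three, hc]
  rw [e21, g4, g2, k3]
  ring

/-- Every coset of `P(m+1)` in `P(m)` has a representative in `N_l ∩ P(m)`. -/
lemma exists_rep (ϖ : O) (hϖ : Irreducible ϖ) (m : ℕ) (hm : 1 ≤ m) :
    ∀ g ∈ Pm O ϖ m, ∃ n ∈ Nl O ⊓ Pm O ϖ m, n⁻¹ * g ∈ Pm O ϖ (m + 1) := by
  intro g hg
  obtain ⟨h0, h1⟩ := mem_Pm_iff.mp hg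
  set M := (g : Matrix (Fin 3) (Fin 3) O) with hM
  -- the upper-left 2×2 determinant is a unit
  have hΔ : IsUnit (M 0 0 * M 1 1 - M 0 1 * M 1 0) := by
    have hdet : IsUnit M.det := (Matrix.isUnit_iff_isUnit_det M).mp g.isUnit
    by_contra hΔ
    have hmem : ∀ x : O, ¬ IsUnit x → x ∈ IsLocalRing.maximalIdeal O := fun x hx =>
      (IsLocalRing.mem_maximalIdeal x).mpr (mem_nonunits_iff.mpr hx)
    have hϖmem : ϖ ∈ IsLocalRing.maximalIdeal O := hmem ϖ hϖ.not_isUnit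
    have h20 : M 2 0 ∈ IsLocalRing.maximalIdeal O := by
      obtain ⟨t, ht⟩ := h0
      rw [ht]
      exact Ideal.mul_mem_right _ _ (Ideal.pow_mem_of_mem _ hϖmem m hm)
    have h21 : M 2 1 ∈ IsLocalRing.maximalIdeal O := by
      obtain ⟨t, ht⟩ := h1
      rw [ht]
      exact Ideal.mul_mem_right _ _ (Ideal.pow_mem_of_mem _ hϖmem m hm)
    have hΔmem : (M 0 0 * M 1 1 - M 0 1 * M 1 0) ∈ IsLocalRing.maximalIdeal O := hmem _ hΔ
    have hdet_eq : M.det = (M 0 0 * M 1 1 - M 0 1 * M 1 0) * M 2 2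
        + (M 0 1 * M 1 2 - M 0 2 * M 1 1) * M 2 0
        + (M 0 2 * M 1 0 - M 0 0 * M 1 2) * M 2 1 := by
      rw [Matrix.det_fin_three]; ring
    have : M.det ∈ IsLocalRing.maximalIdeal O := by
      rw [hdet_eq]
      exact Ideal.add_mem _ (Ideal.add_mem _ (Ideal.mul_mem_right _ _ hΔmem)
        (Ideal.mul_mem_left _ _ h20)) (Ideal.mul_mem_left _ _ h21)
    exact mem_nonunits_iff.mp ((IsLocalRing.mem_maximalIdeal _).mp this) hdet
  obtain ⟨w0, hw0⟩ := h0
  obtain ⟨w1, hw1⟩ := h1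
  obtain ⟨e, he⟩ := hΔ.exists_left_inv
  set n := nUnit (ϖ^m * (e * (w0 * M 1 1 - w1 * M 1 0)))
      (ϖ^m * (e * (M 0 0 * w1 - M 0 1 * w0))) with hn
  refine ⟨n, nUnit_mem_inf ϖ m _ _, ?_⟩
  rw [mem_Pm_iff]
  have hz0 : ((n⁻¹ * g : (Matrix (Fin 3) (Fin 3) O)ˣ) : Matrix (Fin 3) (Fin 3) O) 2 0 = 0 := by
    rw [hn]
    simp only [Units.val_mul, Matrix.mul_apply, Fin.sum_univ_three, nUnit_inv_val,
      nMat_apply_20, nMat_apply_21, nMat_apply_22, ← hM]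
    linear_combination hw0 - ϖ^m * w0 * he
  have hz1 : ((n⁻¹ * g : (Matrix (Fin 3) (Fin 3) O)ˣ) : Matrix (Fin 3) (Fin 3) O) 2 1 = 0 := by
    rw [hn]
    simp only [Units.val_mul, Matrix.mul_apply, Fin.sum_univ_three, nUnit_inv_val,
      nMat_apply_20, nMat_apply_21, nMat_apply_22, ← hM]
    linear_combination hw1 - ϖ^m * w1 * he
  rw [hz0, hz1]
  exact ⟨dvd_zero _, dvd_zero _⟩


lemma Pm_succ_le (ϖ : O) (m : ℕ) : Pm O ϖ (m+1) ≤ Pm O ϖ m := by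
  intro g hg
  obtain ⟨h0, h1⟩ := mem_Pm_iff.mp hg
  exact mem_Pm_iff.mpr ⟨(pow_dvd_pow ϖ (Nat.le_succ m)).trans h0,
    (pow_dvd_pow ϖ (Nat.le_succ m)).trans h1⟩

/-- the residue pair attached to an element of `N_l ∩ P(m)`. -/
noncomputable def phiN (ϖ : O) (m : ℕ) (x : ↥(Nl O ⊓ Pm O ϖ m)) :
    (O ⧸ IsLocalRing.maximalIdeal O) × (O ⧸ IsLocalRing.maximalIdeal O) :=
  (Ideal.Quotient.mk _ ((mem_Pm_iff.mp (Subgroup.mem_inf.mp x.2).2).1.choose),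
   Ideal.Quotient.mk _ ((mem_Pm_iff.mp (Subgroup.mem_inf.mp x.2).2).2.choose))

lemma phiN_eq_iff (ϖ : O) (m : ℕ) (hϖ : Irreducible ϖ) (x y : ↥(Nl O ⊓ Pm O ϖ m)) :
    phiN ϖ m x = phiN ϖ m y ↔
      (↑x)⁻¹ * (↑y : (Matrix (Fin 3) (Fin 3) O)ˣ) ∈ Nl O ⊓ Pm O ϖ (m+1) := by
  have hϖm : (ϖ ^ m : O) ≠ 0 := pow_ne_zero m hϖ.ne_zero
  obtain ⟨hxN, hxP⟩ := Subgroup.mem_inf.mp x.2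
  obtain ⟨hyN, hyP⟩ := Subgroup.mem_inf.mp y.2
  have sx0 := (mem_Pm_iff.mp (Subgroup.mem_inf.mp x.2).2).1.choose_spec
  have sx1 := (mem_Pm_iff.mp (Subgroup.mem_inf.mp x.2).2).2.choose_spec
  have sy0 := (mem_Pm_iff.mp (Subgroup.mem_inf.mp y.2).2).1.choose_spec
  have sy1 := (mem_Pm_iff.mp (Subgroup.mem_inf.mp y.2).2).2.choose_spec
  have hNmem : (↑x)⁻¹ * (↑y : (Matrix (Fin 3) (Fin 3) O)ˣ) ∈ Nl O :=
    (Nl O).mul_mem ((Nl O).inv_mem hxN) hyN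
  unfold phiN
  constructor
  · intro h
    obtain ⟨h0, h1⟩ := Prod.ext_iff.mp h
    rw [Ideal.Quotient.eq, hϖ.maximalIdeal_eq, Ideal.mem_span_singleton] at h0 h1
    refine Subgroup.mem_inf.mpr ⟨hNmem, mem_Pm_iff.mpr ⟨?_, ?_⟩⟩
    · rw [Nl_mul_20 hxN hyN, sy0, sx0, ← mul_sub, pow_succ]
      exact mul_dvd_mul_left _ (dvd_sub_comm.mp h0)
    · rw [Nl_mul_21 hxN hyN, sy1, sx1, ← mul_sub, pow_succ]
      exact mul_dvd_mul_left _ (dvd_sub_comm.mp h1)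
  · intro h
    obtain ⟨d0, d1⟩ := mem_Pm_iff.mp (Subgroup.mem_inf.mp h).2
    rw [Nl_mul_20 hxN hyN, sy0, sx0, ← mul_sub, pow_succ] at d0
    rw [Nl_mul_21 hxN hyN, sy1, sx1, ← mul_sub, pow_succ] at d1
    have h0 := (mul_dvd_mul_iff_left hϖm).mp d0
    have h1 := (mul_dvd_mul_iff_left hϖm).mp d1
    refine Prod.ext_iff.mpr ⟨?_, ?_⟩ <;>
      rw [Ideal.Quotient.eq, hϖ.maximalIdeal_eq, Ideal.mem_span_singleton]
    · exact dvd_sub_comm.mp h0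
    · exact dvd_sub_comm.mp h1

lemma phiN_nUnit (ϖ : O) (m : ℕ) (hϖ : Irreducible ϖ) (a b : O) :
    phiN ϖ m (⟨nUnit (ϖ^m * a) (ϖ^m * b), nUnit_mem_inf ϖ m a b⟩ :
        ↥(Nl O ⊓ Pm O ϖ m)) =
      (Ideal.Quotient.mk _ a, Ideal.Quotient.mk _ b) := by
  have hϖm : (ϖ ^ m : O) ≠ 0 := pow_ne_zero m hϖ.ne_zero
  set x : ↥(Nl O ⊓ Pm O ϖ m) := ⟨nUnit (ϖ^m * a) (ϖ^m * b), nUnit_mem_inf ϖ m a b⟩ with hx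
  have s0 := (mem_Pm_iff.mp (Subgroup.mem_inf.mp x.2).2).1.choose_spec
  have s1 := (mem_Pm_iff.mp (Subgroup.mem_inf.mp x.2).2).2.choose_spec
  have e0 : ((x : (Matrix (Fin 3) (Fin 3) O)ˣ) : Matrix (Fin 3) (Fin 3) O) 2 0
      = ϖ^m * a := rfl
  have e1 : ((x : (Matrix (Fin 3) (Fin 3) O)ˣ) : Matrix (Fin 3) (Fin 3) O) 2 1
      = ϖ^m * b := rfl
  have c0 : (mem_Pm_iff.mp (Subgroup.mem_inf.mp x.2).2).1.choose = a :=
    mul_left_cancel₀ hϖm (s0.symm.trans e0)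
  have c1 : (mem_Pm_iff.mp (Subgroup.mem_inf.mp x.2).2).2.choose = b :=
    mul_left_cancel₀ hϖm (s1.symm.trans e1)
  unfold phiN
  rw [c0, c1]

/-- `(N_l ∩ P(m)) / (N_l ∩ P(m+1)) ≃ (O/ϖ)²`. -/
noncomputable def eqN (ϖ : O) (m : ℕ) (hϖ : Irreducible ϖ) :
    (↥(Nl O ⊓ Pm O ϖ m) ⧸ (Nl O ⊓ Pm O ϖ (m+1)).subgroupOf (Nl O ⊓ Pm O ϖ m)) ≃
      ((O ⧸ IsLocalRing.maximalIdeal O) × (O ⧸ IsLocalRing.maximalIdeal O)) := by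
  refine Equiv.ofBijective
    (fun q => Quotient.liftOn' q (phiN ϖ m) fun a b h => ?_) ⟨?_, ?_⟩
  · refine (phiN_eq_iff ϖ m hϖ a b).mpr ?_
    have := Subgroup.mem_subgroupOf.mp (QuotientGroup.leftRel_apply.mp h)
    simpa using this
  · intro q₁ q₂
    refine Quotient.inductionOn₂' q₁ q₂ fun a b h => ?_
    refine Quotient.sound' (QuotientGroup.leftRel_apply.mpr (Subgroup.mem_subgroupOf.mpr ?_))
    have := (phiN_eq_iff ϖ m hϖ a b).mp h
    simpa using this
  · intro c
    obtain ⟨a, ha⟩ := Ideal.Quotient.mk_surjective c.1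
    obtain ⟨b, hb⟩ := Ideal.Quotient.mk_surjective c.2
    refine ⟨Quotient.mk'' (⟨nUnit (ϖ^m * a) (ϖ^m * b), nUnit_mem_inf ϖ m a b⟩ :
      ↥(Nl O ⊓ Pm O ϖ m)), ?_⟩
    dsimp only
    rw [Quotient.liftOn'_mk'', phiN_nUnit ϖ m hϖ a b, ha, hb]

/-- The bijection between the two quotients, induced by inclusion. -/
noncomputable def eqNP (ϖ : O) (m : ℕ) (hϖ : Irreducible ϖ) (hm : 1 ≤ m) :
    (↥(Nl O ⊓ Pm O ϖ m) ⧸ (Nl O ⊓ Pm O ϖ (m+1)).subgroupOf (Nl O ⊓ Pm O ϖ m)) ≃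
      (↥(Pm O ϖ m) ⧸ (Pm O ϖ (m+1)).subgroupOf (Pm O ϖ m)) := by
  refine Equiv.ofBijective
    (fun q => Quotient.map' (fun x : ↥(Nl O ⊓ Pm O ϖ m) =>
      (⟨↑x, (Subgroup.mem_inf.mp x.2).2⟩ : ↥(Pm O ϖ m)))
      (fun a b h => ?_) q) ⟨?_, ?_⟩
  · have hab := Subgroup.mem_subgroupOf.mp (QuotientGroup.leftRel_apply.mp h)
    refine QuotientGroup.leftRel_apply.mpr (Subgroup.mem_subgroupOf.mpr ?_)
    have h2 : ((↑a : (Matrix (Fin 3) (Fin 3) O)ˣ))⁻¹ * ↑b ∈ Nl O ⊓ Pm O ϖ (m+1) := by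
      simpa using hab
    simpa using (Subgroup.mem_inf.mp h2).2
  · intro q₁ q₂
    refine Quotient.inductionOn₂' q₁ q₂ fun a b h => ?_
    have h' := h
    dsimp only at h'
    rw [Quotient.map'_mk'', Quotient.map'_mk''] at h'
    have hab := Subgroup.mem_subgroupOf.mp (QuotientGroup.leftRel_apply.mp (Quotient.exact' h'))
    refine Quotient.sound' (QuotientGroup.leftRel_apply.mpr (Subgroup.mem_subgroupOf.mpr ?_))
    have haN := (Subgroup.mem_inf.mp a.2).1
    have hbN := (Subgroup.mem_inf.mp b.2).1
    have h2 : ((↑a : (Matrix (Fin 3) (Fin 3) O)ˣ))⁻¹ * ↑b ∈ Nl O ⊓ Pm O ϖ (m+1) :=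
      Subgroup.mem_inf.mpr ⟨(Nl O).mul_mem ((Nl O).inv_mem haN) hbN, by simpa using hab⟩
    simpa using h2
  · intro q
    refine Quotient.inductionOn' q fun g => ?_
    obtain ⟨n, hn, hmem⟩ := exists_rep ϖ hϖ m hm ↑g g.2
    refine ⟨Quotient.mk'' (⟨n, hn⟩ : ↥(Nl O ⊓ Pm O ϖ m)), ?_⟩
    dsimp only
    rw [Quotient.map'_mk'']
    refine Quotient.sound' (QuotientGroup.leftRel_apply.mpr (Subgroup.mem_subgroupOf.mpr ?_))
    simpa using hmem


end Aux


open Multiplicative in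
lemma exists_char (k : Type) [Field k] :
    ∃ (ψ : Multiplicative k →* ℂˣ) (x₀ : k), ψ (ofAdd x₀) ≠ 1 := by
  obtain ⟨p, hp⟩ := CharP.exists k
  rcases CharP.char_is_prime_or_zero k p with hprime | h0
  · -- positive characteristic
    haveI : Fact p.Prime := ⟨hprime⟩
    haveI : NeZero p := ⟨hprime.ne_zero⟩
    letI : Algebra (ZMod p) k := ZMod.algebra _ _
    let b := Module.Basis.ofVectorSpace (ZMod p) k
    obtain ⟨i⟩ := b.index_nonempty
    let f := b.coord i
    have hf : f (b i) = 1 := by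
      simp [f, Module.Basis.coord_apply]
    obtain ⟨φ, hφ⟩ := ZMod.exists_monoidHom_apply_ne_one (M := ℂ)
      ⟨_, Complex.isPrimitiveRoot_exp p hprime.ne_zero⟩ (one_ne_zero (α := ZMod p))
    refine ⟨φ.comp (AddMonoidHom.toMultiplicative f.toAddMonoidHom), b i, ?_⟩
    have : (AddMonoidHom.toMultiplicative f.toAddMonoidHom) (ofAdd (b i)) = ofAdd (1 : ZMod p) := by
      simp [AddMonoidHom.toMultiplicative, hf]
    rw [MonoidHom.comp_apply, this]
    exact hφ
  · -- characteristic zero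
    subst h0
    haveI : CharZero k := CharP.charP_to_charZero k
    let b := Module.Basis.ofVectorSpace ℚ k
    obtain ⟨i⟩ := b.index_nonempty
    let f := b.coord i
    have hf : f (b i) = 1 := by
      simp [f, Module.Basis.coord_apply]
    refine ⟨MonoidHom.mk' (fun x => Units.mk0 (Complex.exp ((f x.toAdd : ℚ) : ℂ))
        (Complex.exp_ne_zero _)) ?_, b i, ?_⟩
    · intro x y
      refine Units.ext ?_
      push_cast
      simp [Complex.exp_add]
    intro hcontra
    have h1 : Complex.exp ((((f (b i) : ℚ)) : ℂ)) = 1 := congrArg Units.val hcontra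
    rw [hf] at h1
    have h2 : Complex.exp 1 = 1 := by simpa using h1
    have h3 : ((Real.exp 1 : ℝ) : ℂ) = ((1 : ℝ) : ℂ) := by
      rw [Complex.ofReal_exp]
      simpa using h2
    have h4 : Real.exp 1 = 1 := Complex.ofReal_inj.mp h3
    have := Real.exp_one_gt_d9
    rw [h4] at this
    norm_num at this

open Multiplicative in
lemma card_characters (k : Type) [CommRing k] (hf : IsField k) :
    Nat.card (Multiplicative (k × k) →* ℂˣ) = Nat.card k ^ 2 := by
  letI : Field k := hf.toField
  by_cases hfin : Finite k
  · haveI : Finite (k × k) := Finite.instProd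
    haveI : Finite (Multiplicative (k × k)) := Finite.of_equiv _ (Multiplicative.ofAdd)
    haveI : NeZero ((Monoid.exponent (Multiplicative (k × k)) : ℂ)) := by
      haveI := Fintype.ofFinite (Multiplicative (k × k))
      have hEE : Monoid.ExponentExists (Multiplicative (k × k)) :=
        ⟨Fintype.card (Multiplicative (k × k)), Fintype.card_pos, fun g => pow_card_eq_one⟩
      exact ⟨Nat.cast_ne_zero.mpr (Monoid.exponent_ne_zero.mpr hEE)⟩
    obtain ⟨e⟩ := CommGroup.monoidHom_mulEquiv_of_hasEnoughRootsOfUnity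
      (Multiplicative (k × k)) ℂ
    rw [Nat.card_congr e.toEquiv, Nat.card_congr (Multiplicative.toAdd (α := k × k)),
      Nat.card_prod, pow_two]
  · haveI : Infinite k := not_finite_iff_infinite.mp hfin
    obtain ⟨ψ, x₀, hx₀⟩ := exists_char k
    -- first injection : k ↪ characters of k
    have inj1 : Function.Injective
        (fun a : k => ψ.comp (AddMonoidHom.toMultiplicative (AddMonoidHom.mulLeft a))) := by
      intro a b hab
      by_contra hne
      have hd : a - b ≠ 0 := sub_ne_zero_of_ne hne
      set x : k := (a - b)⁻¹ * x₀ with hx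
      have key := DFunLike.congr_fun hab (ofAdd x)
      simp only [MonoidHom.comp_apply, AddMonoidHom.toMultiplicative_apply_apply,
        AddMonoidHom.coe_mulLeft, toAdd_ofAdd] at key
      have h1 : a * x = b * x + x₀ := by
        rw [hx]
        field_simp
        ring
      rw [h1, ofAdd_add, _root_.map_mul] at key
      exact hx₀ (mul_eq_left.mp key)
    -- second injection : characters of k ↪ characters of k × k
    have inj2 : Function.Injective
        (fun χ : Multiplicative k →* ℂˣ =>
          χ.comp (AddMonoidHom.toMultiplicative (AddMonoidHom.fst k k))) := by
      intro χ₁ χ₂ h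
      refine MonoidHom.ext fun x => ?_
      have := DFunLike.congr_fun h (ofAdd (x.toAdd, 0))
      simpa using this
    haveI : Infinite (Multiplicative (k × k) →* ℂˣ) :=
      Infinite.of_injective _ (inj2.comp inj1)
    rw [Nat.card_eq_zero_of_infinite, Nat.card_eq_zero_of_infinite]
    norm_num

/-- the inclusion `N_l ∩ P(m) ↪ P(m)` induces a bijection
`(N_l ∩ P(m))/(N_l ∩ P(m+1)) ≅ P(m)/P(m+1)`; both quotients have cardinality `q²`
(`q` the residue cardinality), the quotient is in bijection with `(O/ϖ)²`, and the
regular representation of this quotient decomposes into its `q²` characters, each with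
multiplicity one (there are exactly `q²` characters). -/
theorem quotient_parahoric_description
    (O : Type) [CommRing O] [IsDomain O] [IsDiscreteValuationRing O]
    (ϖ : O) (hϖ : Irreducible ϖ) (m : ℕ) (hm : 1 ≤ m)
    (q : ℕ) (hq : q = Nat.card (O ⧸ IsLocalRing.maximalIdeal O)) :
    -- every coset of `P(m+1)` in `P(m)` has a representative in `N_l ∩ P(m)` …
    (∀ g ∈ Pm O ϖ m, ∃ n ∈ Nl O ⊓ Pm O ϖ m, n⁻¹ * g ∈ Pm O ϖ (m + 1)) ∧
    -- … which is unique modulo `N_l ∩ P(m+1)`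
    (∀ n₁ ∈ Nl O ⊓ Pm O ϖ m, ∀ n₂ ∈ Nl O ⊓ Pm O ϖ m,
      (n₁⁻¹ * n₂ ∈ Pm O ϖ (m + 1) ↔ n₁⁻¹ * n₂ ∈ Nl O ⊓ Pm O ϖ (m + 1))) ∧
    -- both quotients have cardinality q²
    ((Pm O ϖ (m + 1)).subgroupOf (Pm O ϖ m)).index = q ^ 2 ∧
    ((Nl O ⊓ Pm O ϖ (m + 1)).subgroupOf (Nl O ⊓ Pm O ϖ m)).index = q ^ 2 ∧
    -- the quotient is (O/ϖ)²
    Nonempty ((↥(Pm O ϖ m) ⧸ (Pm O ϖ (m + 1)).subgroupOf (Pm O ϖ m)) ≃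
      ((O ⧸ IsLocalRing.maximalIdeal O) × (O ⧸ IsLocalRing.maximalIdeal O))) ∧
    -- the abelian group (O/ϖ)² has exactly q² characters (each occurring once in the
    -- regular representation)
    Nat.card (Multiplicative
        ((O ⧸ IsLocalRing.maximalIdeal O) × (O ⧸ IsLocalRing.maximalIdeal O)) →* ℂˣ)
      = q ^ 2 := by
  subst hq
  refine ⟨exists_rep ϖ hϖ m hm, ?_, ?_, ?_, ?_, ?_⟩
  · intro n₁ h₁ n₂ h₂
    constructor
    · intro hp
      exact Subgroup.mem_inf.mpr ⟨(Nl O).mul_mem ((Nl O).inv_mem (Subgroup.mem_inf.mp h₁).1)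
        (Subgroup.mem_inf.mp h₂).1, hp⟩
    · intro hp
      exact (Subgroup.mem_inf.mp hp).2
  · rw [Subgroup.index_eq_card, Nat.card_congr ((eqNP ϖ m hϖ hm).symm.trans (eqN ϖ m hϖ)),
      Nat.card_prod, pow_two]
  · rw [Subgroup.index_eq_card, Nat.card_congr (eqN ϖ m hϖ), Nat.card_prod, pow_two]
  · exact ⟨(eqNP ϖ m hϖ hm).symm.trans (eqN ϖ m hϖ)⟩
  · exact card_characters (O ⧸ IsLocalRing.maximalIdeal O) (Ideal.Quotient.field _).toIsField
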